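/- Let λ > 0 and n ∈ ℕ. For every x ∈ [−1, 0], the function s ↦ e^{−λ(x−s)} is integrable on (−∞, x−n−1] and ∫_{−∞}^{x−n−1} e^{−λ(x−s)} ds = (1/λ)·e^{−λ(n+1)}. Consequently, if f : ℝ → [0,1] is measurable with f(s) = 1 for all s ≤ −n−1 and f(s) = 0 for all s ∈ [−n, 0], then for every x ∈ [−1, 0] one has ∫₀^∞ e^{−λt} f(x−t) dt ≥ (1/λ)·e^{−λ(n+1)} > 0, while sup_{s∈[−n,0]} |f(s)| = 0. -/

import Mathlib

open MeasureTheory Set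

lemma exp_neg_mul_Ioi_integral (b a : ℝ) (hb : 0 < b) :
    ∫ x in Set.Ioi a, Real.exp (-(b * x)) = Real.exp (-(b * a)) / b := by
  have hint : IntegrableOn (fun x : ℝ => Real.exp (-(b * x))) (Set.Ioi a) := by
    simpa [neg_mul] using exp_neg_integrableOn_Ioi a hb
  have hderiv : ∀ x ∈ Set.Ioi a,
      HasDerivAt (fun y : ℝ => -Real.exp (-(b * y)) / b) (Real.exp (-(b * x))) x := by
    intro x _
    have h1 : HasDerivAt (fun y : ℝ => -(b * y)) (-b) x := by
      simpa using ((hasDerivAt_id x).const_mul b).fun_neg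
    have h2 := (Real.hasDerivAt_exp (-(b * x))).comp x h1
    have h3 : HasDerivAt (fun y : ℝ => -Real.exp (-(b * y)) / b)
        (-(Real.exp (-(b * x)) * -b) / b) x := (h2.neg.div_const b)
    convert h3 using 1
    field_simp [hb.ne']
  have htend : Filter.Tendsto (fun y : ℝ => -Real.exp (-(b * y)) / b) Filter.atTop (nhds 0) := by
    have : Filter.Tendsto (fun y : ℝ => Real.exp (-(b * y))) Filter.atTop (nhds 0) := by
      apply Real.tendsto_exp_atBot.comp
      have h1 : Filter.Tendsto (fun y : ℝ => b * y) Filter.atTop Filter.atTop :=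
        Filter.Tendsto.const_mul_atTop hb Filter.tendsto_id
      exact Filter.tendsto_neg_atTop_atBot.comp h1
    simpa using (this.neg.div_const b)
  have hcont : ContinuousWithinAt (fun y : ℝ => -Real.exp (-(b * y)) / b) (Set.Ici a) a :=
    (((Real.continuous_exp.comp (by continuity)).neg.div_const b)).continuousWithinAt
  have := integral_Ioi_of_hasDerivAt_of_tendsto hcont hderiv hint htend
  rw [this]; ring

lemma integrableOn_Iic_of_comp_neg {g : ℝ → ℝ} {a : ℝ}
    (h : IntegrableOn (fun x => g (-x)) (Set.Ioi (-a))) : IntegrableOn g (Set.Iic a) := by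
  have A : MeasurableEmbedding fun x : ℝ => -x :=
    (Homeomorph.neg ℝ).isClosedEmbedding.measurableEmbedding
  rw [IntegrableOn, ← Measure.map_neg_eq_self (volume : Measure ℝ),
    Measure.restrict_map A.measurable measurableSet_Iic, A.integrable_map_iff]
  have hpre : (fun x : ℝ => -x) ⁻¹' Set.Iic a = Set.Ici (-a) := by
    ext y; simp [neg_le]
  rw [hpre]
  exact (integrableOn_Ici_iff_integrableOn_Ioi).mpr h

theorem right_translation_generator_not_bi_dissipative_computation
    (lam : ℝ) (hlam : 0 < lam) (n : ℕ) :
    (∀ x ∈ Set.Icc (-1 : ℝ) 0,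
      IntegrableOn (fun s : ℝ => Real.exp (-(lam * (x - s)))) (Set.Iic (x - n - 1)) ∧
      (∫ s in Set.Iic (x - (n : ℝ) - 1), Real.exp (-(lam * (x - s)))) =
        (1 / lam) * Real.exp (-(lam * (n + 1)))) ∧
    ∀ f : ℝ → ℝ, Measurable f → (∀ s, f s ∈ Set.Icc (0 : ℝ) 1) →
      (∀ s : ℝ, s ≤ -(n : ℝ) - 1 → f s = 1) →
      (∀ s ∈ Set.Icc (-(n : ℝ)) 0, f s = 0) →
      (∀ x ∈ Set.Icc (-1 : ℝ) 0,
        (1 / lam) * Real.exp (-(lam * (n + 1))) ≤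
          ∫ t in Set.Ioi (0 : ℝ), Real.exp (-(lam * t)) * f (x - t)) ∧
      0 < (1 / lam) * Real.exp (-(lam * (n + 1))) ∧
      (⨆ s : Set.Icc (-(n : ℝ)) 0, |f s|) = 0 := by
  constructor
  · intro x hx
    constructor
    · apply integrableOn_Iic_of_comp_neg
      have : IntegrableOn (fun u : ℝ => Real.exp (-(lam * x)) * Real.exp (-(lam * u)))
          (Set.Ioi (-(x - n - 1))) := by
        apply Integrable.const_mul
        simpa [neg_mul, IntegrableOn] using exp_neg_integrableOn_Ioi (-(x - (n:ℝ) - 1)) hlam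
      apply this.congr_fun _ measurableSet_Ioi
      intro u _
      show Real.exp (-(lam * x)) * Real.exp (-(lam * u)) = Real.exp (-(lam * (x - -u)))
      rw [← Real.exp_add]
      ring_nf
    · have key := integral_comp_neg_Ioi (-(x - (n : ℝ) - 1))
        (fun s => Real.exp (-(lam * (x - s))))
      rw [neg_neg] at key
      rw [← key]
      have heq : ∀ u : ℝ, Real.exp (-(lam * (x - -u))) =
          Real.exp (-(lam * x)) * Real.exp (-(lam * u)) := by
        intro u
        rw [← Real.exp_add]; ring_nf
      simp_rw [heq]
      rw [MeasureTheory.integral_const_mul, exp_neg_mul_Ioi_integral lam _ hlam]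
      have hmul : Real.exp (-(lam * x)) * Real.exp (-(lam * -(x - (n:ℝ) - 1))) =
          Real.exp (-(lam * ((n:ℝ) + 1))) := by
        rw [← Real.exp_add]; ring_nf
      rw [← mul_div_assoc, hmul]
      ring
  · intro f hfm hf01 hf1 hf0
    refine ⟨?_, ?_, ?_⟩
    · intro x hx
      obtain ⟨hx1, hx0⟩ := hx
      set a : ℝ := x + n + 1 with ha
      have ha0 : 0 ≤ a := by simp only [ha]; linarith [Nat.cast_nonneg (α := ℝ) n]
      have hIexp : IntegrableOn (fun t : ℝ => Real.exp (-(lam * t))) (Set.Ioi (0:ℝ)) := by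
        simpa [neg_mul] using exp_neg_integrableOn_Ioi (0:ℝ) hlam
      have hg_meas : Measurable fun t : ℝ => Real.exp (-(lam * t)) * f (x - t) := by
        exact (Real.measurable_exp.comp ((measurable_const.mul measurable_id).neg)).mul
          (hfm.comp (measurable_const.sub measurable_id))
      have hgint : IntegrableOn (fun t : ℝ => Real.exp (-(lam * t)) * f (x - t))
          (Set.Ioi (0:ℝ)) := by
        apply Integrable.mono' hIexp hg_meas.aestronglyMeasurable
        filter_upwards with t
        have h0 := (hf01 (x - t)).1
        have h1 := (hf01 (x - t)).2
        rw [Real.norm_eq_abs, abs_mul, abs_of_pos (Real.exp_pos _), abs_of_nonneg h0]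
        calc Real.exp (-(lam * t)) * f (x - t) ≤ Real.exp (-(lam * t)) * 1 :=
              mul_le_mul_of_nonneg_left h1 (Real.exp_pos _).le
          _ = Real.exp (-(lam * t)) := mul_one _
      have hsub : Set.Ioi a ⊆ Set.Ioi (0:ℝ) := Set.Ioi_subset_Ioi ha0
      have hstep1 : (∫ t in Set.Ioi a, Real.exp (-(lam * t)) * f (x - t)) ≤
          ∫ t in Set.Ioi (0:ℝ), Real.exp (-(lam * t)) * f (x - t) := by
        apply setIntegral_mono_set hgint
        · filter_upwards with t
          exact mul_nonneg (Real.exp_pos _).le (hf01 (x - t)).1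
        · exact Filter.Eventually.of_forall hsub
      have hstep2 : (∫ t in Set.Ioi a, Real.exp (-(lam * t)) * f (x - t)) =
          ∫ t in Set.Ioi a, Real.exp (-(lam * t)) := by
        apply setIntegral_congr_fun measurableSet_Ioi
        intro t ht
        have hle : x - t ≤ -(n:ℝ) - 1 := by
          simp only [Set.mem_Ioi, ha] at ht; linarith
        show Real.exp (-(lam * t)) * f (x - t) = Real.exp (-(lam * t))
        rw [hf1 _ hle, mul_one]
      have hstep3 : (∫ t in Set.Ioi a, Real.exp (-(lam * t))) =
          Real.exp (-(lam * a)) / lam := exp_neg_mul_Ioi_integral lam a hlam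
      have hstep4 : (1 / lam) * Real.exp (-(lam * (n + 1))) ≤ Real.exp (-(lam * a)) / lam := by
        have hexp : Real.exp (-(lam * ((n:ℝ) + 1))) ≤ Real.exp (-(lam * a)) := by
          apply Real.exp_le_exp.mpr
          have hax : lam * a ≤ lam * ((n:ℝ) + 1) := by
            apply mul_le_mul_of_nonneg_left _ hlam.le
            simp only [ha]; linarith
          linarith
        calc (1 / lam) * Real.exp (-(lam * ((n:ℝ) + 1)))
            = Real.exp (-(lam * ((n:ℝ) + 1))) / lam := by ring
          _ ≤ Real.exp (-(lam * a)) / lam := by gcongr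
      calc (1 / lam) * Real.exp (-(lam * (n + 1))) ≤ Real.exp (-(lam * a)) / lam := hstep4
        _ = ∫ t in Set.Ioi a, Real.exp (-(lam * t)) := hstep3.symm
        _ = ∫ t in Set.Ioi a, Real.exp (-(lam * t)) * f (x - t) := hstep2.symm
        _ ≤ _ := hstep1
    · positivity
    · have hne : Nonempty (Set.Icc (-(n:ℝ)) 0) :=
        Set.nonempty_Icc.mpr (neg_nonpos.mpr (Nat.cast_nonneg n)) |>.to_subtype
      have : ∀ s : Set.Icc (-(n:ℝ)) 0, |f s| = (0:ℝ) := by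
        intro s; rw [hf0 s s.2, abs_zero]
      calc (⨆ s : Set.Icc (-(n:ℝ)) 0, |f s|) = ⨆ _ : Set.Icc (-(n:ℝ)) 0, (0:ℝ) := by
            exact iSup_congr this
        _ = 0 := ciSup_const
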